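/- arXiv:1304.6814 — 2 statements merged into one kernel-verified Lean document; each statement's English description precedes it below -/
import Mathlib

section
/- Improved upper bounds for structure functions for p ≥ 1: for every p ≥ 0 there exists a constant C(p) > 0 depending only on p, f and D such that for all ℓ ∈ [0,1]: S_p(ℓ) ≤ C(p) ℓ^p if 0 ≤ p ≤ 1, and S_p(ℓ) ≤ C(p) ℓ if p ≥ 1. -/
open MeasureTheory Set
open scoped ENNReal

noncomputable section

/-- The `L^p` norm of a function on the circle, represented by the
fundamental domain `(0,1]` (`p = ∞` gives the essential supremum). -/
def circLp (p : ℝ≥0∞) (v : ℝ → ℝ) : ℝ :=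
  (eLpNorm v p (volume.restrict (Ioc (0:ℝ) 1))).toReal

/-- The homogeneous `W^{m,p}` norm `|v|_{m,p} = |v^{(m)}|_p` on the circle. -/
def circW (m : ℕ) (p : ℝ≥0∞) (v : ℝ → ℝ) : ℝ :=
  circLp p (iteratedDeriv m v)

/-- The homogeneous `H^m` norm `‖v‖_m = |v|_{m,2}` on the circle. -/
def circH (m : ℕ) (v : ℝ → ℝ) : ℝ := circW m 2 v

/-- The parameter `D = max(|u₀|₁⁻¹, |u₀|_{1,∞})`. -/
def Dparam (u0 : ℝ → ℝ) : ℝ := max (circLp 1 u0)⁻¹ (circW 1 ⊤ u0)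

/-- `γ(m,p) = max (0, m - 1/p)`. -/
def gam (m : ℕ) (p : ℝ≥0∞) : ℝ := max 0 ((m : ℝ) - (1 / p).toReal)

/-- `u` is a smooth, space-periodic, zero mean value solution of the
generalised Burgers equation `u_t + f'(u) u_x = ν u_xx` for `t ≥ 0`. -/
def BurgersSol (f : ℝ → ℝ) (ν : ℝ) (u : ℝ → ℝ → ℝ) : Prop :=
  ContDiff ℝ (⊤ : ℕ∞) (fun q : ℝ × ℝ => u q.1 q.2) ∧
  (∀ t, Function.Periodic (u t) 1) ∧
  (∀ t, 0 ≤ t → (∫ x in (0:ℝ)..1, u t x) = 0) ∧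
  (∀ t, 0 ≤ t → ∀ x,
    deriv (fun s => u s x) t + deriv f (u t x) * deriv (u t) x
      = ν * iteratedDeriv 2 (u t) x)

/-- The left end `T₁ = (1/4) D⁻² C̃⁻¹` of the averaging interval. -/
def Tone (D Ct : ℝ) : ℝ := (1/4) * (D^2)⁻¹ * Ct⁻¹

/-- The right end `T₂ = max((3/2)T₁, 2Dσ⁻¹)` of the averaging interval. -/
def Ttwo (σ D Ct : ℝ) : ℝ := max ((3/2) * Tone D Ct) (2 * D * σ⁻¹)

/-- The time average `{A} = (T₂-T₁)⁻¹ ∫_{T₁}^{T₂} A(t) dt`. -/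
def tavg (σ D Ct : ℝ) (A : ℝ → ℝ) : ℝ :=
  (Ttwo σ D Ct - Tone D Ct)⁻¹ * ∫ t in (Tone D Ct)..(Ttwo σ D Ct), A t

/-- The structure function `S_p(ℓ)`. -/
def Sfun (σ D Ct : ℝ) (u : ℝ → ℝ → ℝ) (p ℓ : ℝ) : ℝ :=
  tavg σ D Ct (fun t => ∫ x in (0:ℝ)..1, |u t (x + ℓ) - u t x| ^ p)



section AuxProofs
open Filter intervalIntegral




/-- Partial derivative in the second (space) variable. -/
def pdx (G : ℝ × ℝ → ℝ) (q : ℝ × ℝ) : ℝ := fderiv ℝ G q (0, 1)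

/-- Partial derivative in the first (time) variable. -/
def pdt (G : ℝ × ℝ → ℝ) (q : ℝ × ℝ) : ℝ := fderiv ℝ G q (1, 0)

lemma hasDerivAt_slice_x {G : ℝ × ℝ → ℝ} (hG : Differentiable ℝ G) (t x : ℝ) :
    HasDerivAt (fun y => G (t, y)) (pdx G (t, x)) x := by
  have h1 : HasDerivAt (fun y : ℝ => ((t, y) : ℝ × ℝ)) ((0 : ℝ), (1 : ℝ)) x :=
    (hasDerivAt_const x t).prodMk (hasDerivAt_id x)
  exact (hG (t, x)).hasFDerivAt.comp_hasDerivAt x h1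

lemma hasDerivAt_slice_t {G : ℝ × ℝ → ℝ} (hG : Differentiable ℝ G) (t x : ℝ) :
    HasDerivAt (fun s => G (s, x)) (pdt G (t, x)) t := by
  have h1 : HasDerivAt (fun s : ℝ => ((s, x) : ℝ × ℝ)) ((1 : ℝ), (0 : ℝ)) t :=
    (hasDerivAt_id t).prodMk (hasDerivAt_const t x)
  exact (hG (t, x)).hasFDerivAt.comp_hasDerivAt t h1

lemma contDiff_pdx {G : ℝ × ℝ → ℝ} (hG : ContDiff ℝ (⊤ : ℕ∞) G) :
    ContDiff ℝ (⊤ : ℕ∞) (pdx G) := by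
  have h := (hG.fderiv_right (m := (⊤:ℕ∞)) (by exact_mod_cast le_top))
  exact h.clm_apply contDiff_const

lemma contDiff_pdt {G : ℝ × ℝ → ℝ} (hG : ContDiff ℝ (⊤ : ℕ∞) G) :
    ContDiff ℝ (⊤ : ℕ∞) (pdt G) := by
  have h := (hG.fderiv_right (m := (⊤:ℕ∞)) (by exact_mod_cast le_top))
  exact h.clm_apply contDiff_const

/-- Clairaut: mixed partials commute for smooth functions. -/
lemma pdt_pdx_comm {G : ℝ × ℝ → ℝ} (hG : ContDiff ℝ (⊤ : ℕ∞) G) (q : ℝ × ℝ) :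
    pdt (pdx G) q = pdx (pdt G) q := by
  have hd : Differentiable ℝ G := hG.differentiable (by simp)
  have hd' : Differentiable ℝ (fderiv ℝ G) :=
    (hG.fderiv_right (m := (⊤:ℕ∞)) (by exact_mod_cast le_top)).differentiable (by simp)
  have hsym : ∀ v w : ℝ × ℝ, fderiv ℝ (fderiv ℝ G) q v w = fderiv ℝ (fderiv ℝ G) q w v := by
    intro v w
    exact second_derivative_symmetric (fun y => (hd y).hasFDerivAt)
      ((hd' q).hasFDerivAt) v w
  have e1 : ∀ v : ℝ × ℝ, fderiv ℝ (fun z => fderiv ℝ G z v) q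
      = (fderiv ℝ (fderiv ℝ G) q).flip v := by
    intro v
    have : (fun z => fderiv ℝ G z v)
        = (fun L : (ℝ × ℝ) →L[ℝ] ℝ => L v) ∘ (fderiv ℝ G) := rfl
    rw [this]
    have hA : HasFDerivAt (fun L : (ℝ × ℝ) →L[ℝ] ℝ => L v)
        (ContinuousLinearMap.apply ℝ ℝ v) (fderiv ℝ G q) :=
      (ContinuousLinearMap.apply ℝ ℝ v).hasFDerivAt
    have := hA.comp q (hd' q).hasFDerivAt
    rw [this.fderiv]
    rfl
  show fderiv ℝ (fun z => fderiv ℝ G z (0,1)) q (1,0)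
      = fderiv ℝ (fun z => fderiv ℝ G z (1,0)) q (0,1)
  rw [e1, e1]
  exact hsym (1,0) (0,1)


/-- At an interior local max, if `deriv g` has a derivative, it is nonpositive. -/
lemma isLocalMax_deriv_deriv_nonpos {g : ℝ → ℝ} {x : ℝ} (hc : Continuous g)
    (hd : Differentiable ℝ g) (hd2 : Differentiable ℝ (deriv g))
    (hmax : IsLocalMax g x) : deriv (deriv g) x ≤ 0 := by
  by_contra hpos
  push_neg at hpos
  have h0 : deriv g x = 0 := hmax.deriv_eq_zero
  have hda : HasDerivAt (deriv g) (deriv (deriv g) x) x := (hd2 x).hasDerivAt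
  -- slope of deriv g tends to deriv (deriv g) x > 0, so deriv g > 0 right of x
  have hslope := hasDerivAt_iff_tendsto_slope.mp hda
  have hev : ∀ᶠ y in nhdsWithin x {x}ᶜ, 0 < slope (deriv g) x y :=
    hslope.eventually (eventually_gt_nhds hpos)
  have hev' : ∀ᶠ y in nhdsWithin x (Ioi x), 0 < deriv g y := by
    have : nhdsWithin x (Ioi x) ≤ nhdsWithin x {x}ᶜ :=
      nhdsWithin_mono x (fun y hy => ne_of_gt hy)
    filter_upwards [this hev, self_mem_nhdsWithin] with y hy hy'
    have hxy : 0 < y - x := sub_pos.mpr hy'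
    have : slope (deriv g) x y = (deriv g y - 0) / (y - x) := by
      rw [slope_def_field, h0]
    rw [this] at hy
    have := mul_pos hy hxy
    rw [div_mul_cancel₀] at this
    · linarith
    · exact ne_of_gt hxy
  rcases (nhdsGT_basis x).eventually_iff.mp hev' with ⟨b, hb, hball⟩
  -- g is strictly monotone on [x, b], contradicting local max
  have hmono : StrictMonoOn g (Icc x b) := by
    apply strictMonoOn_of_deriv_pos (convex_Icc x b) (hc.continuousOn)
    intro y hy
    rw [interior_Icc] at hy
    exact hball ⟨hy.1, hy.2⟩
  have : ∀ᶠ y in nhdsWithin x (Ioi x), g y ≤ g x := by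
    have : nhdsWithin x (Ioi x) ≤ nhds x := nhdsWithin_le_nhds
    exact this hmax
  rcases ((nhdsGT_basis x).eventually_iff.mp this) with ⟨c, hcb, hcball⟩
  set z := (x + min b c) / 2 with hz
  have hxz : x < z := by
    have : x < min b c := lt_min hb hcb
    simp only [hz]; linarith
  have hzb : z ≤ b := by
    have : min b c ≤ b := min_le_left _ _
    have hx : x < b := hb
    simp only [hz]; linarith
  have hzc : z < c := by
    have : min b c ≤ c := min_le_right _ _
    have hx : x < c := hcb
    simp only [hz]; linarith
  have h1 : g x < g z := hmono ⟨le_rfl, le_trans (le_of_lt hxz) hzb⟩ ⟨le_of_lt hxz, hzb⟩ hxz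
  have h2 : g z ≤ g x := hcball ⟨hxz, hzc⟩
  linarith

/-- If `g t ≤ g b` for `t` slightly less than `b` and `g` has derivative `c` at `b`,
then `0 ≤ c`. -/
lemma deriv_nonneg_of_left_le {g : ℝ → ℝ} {b c : ℝ}
    (hder : HasDerivAt g c b)
    (hle : ∀ᶠ t in nhdsWithin b (Iio b), g t ≤ g b) : 0 ≤ c := by
  have hslope := hasDerivAt_iff_tendsto_slope.mp hder
  have hmono : nhdsWithin b (Iio b) ≤ nhdsWithin b {b}ᶜ :=
    nhdsWithin_mono b (fun y hy => ne_of_lt hy)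
  have h2 : Tendsto (slope g b) (nhdsWithin b (Iio b)) (nhds c) :=
    hslope.mono_left hmono
  refine ge_of_tendsto h2 ?_
  filter_upwards [hle, self_mem_nhdsWithin] with t ht ht'
  have hbt : t - b < 0 := sub_neg.mpr ht'
  rw [slope_def_field]
  exact div_nonneg_of_nonpos (by linarith) hbt.le

section Oleinik

variable {f : ℝ → ℝ} {σ ν : ℝ} {u : ℝ → ℝ → ℝ}

theorem oleinik (hf : ContDiff ℝ (⊤ : ℕ∞) f) (hσ : 0 < σ)
    (hconv : ∀ x, σ ≤ iteratedDeriv 2 f x) (hν : 0 < ν)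
    (hB : BurgersSol f ν u) {t₀ : ℝ} (ht₀ : 0 < t₀) (x₀ : ℝ) :
    pdx (fun q : ℝ × ℝ => u q.1 q.2) (t₀, x₀) ≤ (σ * t₀)⁻¹ := by
  obtain ⟨hU, hper, hmean, hpde⟩ := hB
  set U : ℝ × ℝ → ℝ := fun q => u q.1 q.2 with hUdef
  set W : ℝ × ℝ → ℝ := pdx U with hWdef
  have hUd : Differentiable ℝ U := hU.differentiable (by simp)
  have hWsm : ContDiff ℝ (⊤ : ℕ∞) W := contDiff_pdx hU
  have hWd : Differentiable ℝ W := hWsm.differentiable (by simp)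
  have hWxsm : ContDiff ℝ (⊤ : ℕ∞) (pdx W) := contDiff_pdx hWsm
  have hWxd : Differentiable ℝ (pdx W) := hWxsm.differentiable (by simp)
  have hUtsm : ContDiff ℝ (⊤ : ℕ∞) (pdt U) := contDiff_pdt hU
  have hUtd : Differentiable ℝ (pdt U) := hUtsm.differentiable (by simp)
  have hfd : Differentiable ℝ f := hf.differentiable (by simp)
  have hf'sm : ContDiff ℝ (⊤ : ℕ∞) (deriv f) := (contDiff_infty_iff_deriv.mp (by exact_mod_cast hf)).2
  have hf'd : Differentiable ℝ (deriv f) := hf'sm.differentiable (by simp)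
  -- slice derivatives of u
  have hslice : ∀ t x, deriv (u t) x = W (t, x) := by
    intro t x
    exact (hasDerivAt_slice_x hUd t x).deriv
  have hderiv_ut : ∀ t, deriv (u t) = fun y => W (t, y) := fun t => funext (hslice t)
  have hslice2 : ∀ t x, iteratedDeriv 2 (u t) x = pdx W (t, x) := by
    intro t x
    rw [show (2:ℕ) = 1 + 1 from rfl, iteratedDeriv_succ, iteratedDeriv_one, hderiv_ut t]
    exact (hasDerivAt_slice_x hWd t x).deriv
  -- the PDE in terms of partial derivatives
  have hPDE : ∀ t, 0 ≤ t → ∀ x,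
      pdt U (t, x) = ν * pdx W (t, x) - deriv f (U (t, x)) * W (t, x) := by
    intro t ht x
    have h := hpde t ht x
    have h1 : deriv (fun s => u s x) t = pdt U (t, x) :=
      (hasDerivAt_slice_t hUd t x).deriv
    rw [h1, hslice t x, hslice2 t x] at h
    have : U (t, x) = u t x := rfl
    rw [this]; linarith
  -- key differential inequality at a spatial local max
  have hkey : ∀ t x, 0 ≤ t → IsLocalMax (fun y => W (t, y)) x →
      pdt W (t, x) ≤ -(σ * W (t, x) ^ 2) := by
    intro t x ht hmax
    set g : ℝ → ℝ := fun y => W (t, y) with hgdef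
    have hgd : Differentiable ℝ g := fun y =>
      (hasDerivAt_slice_x hWd t y).differentiableAt
    have hgderiv : deriv g = fun y => pdx W (t, y) :=
      funext fun y => (hasDerivAt_slice_x hWd t y).deriv
    have hg1 : pdx W (t, x) = 0 := by
      have h := hmax.deriv_eq_zero
      rw [hgderiv] at h
      exact h
    have hg2 : pdx (pdx W) (t, x) ≤ 0 := by
      have hcont : Continuous g := by
        have : Continuous W := hWsm.continuous
        exact this.comp (continuous_const.prodMk continuous_id)
      have hd2 : Differentiable ℝ (deriv g) := by
        rw [hgderiv]
        exact fun y => (hasDerivAt_slice_x hWxd t y).differentiableAt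
      have h := isLocalMax_deriv_deriv_nonpos hcont hgd hd2 hmax
      rw [hgderiv] at h
      rwa [show deriv (fun y => pdx W (t, y)) x = pdx (pdx W) (t, x) from
        (hasDerivAt_slice_x hWxd t x).deriv] at h
    have hL : HasDerivAt (fun y => pdt U (t, y)) (pdx (pdt U) (t, x)) x :=
      hasDerivAt_slice_x hUtd t x
    have hUy : HasDerivAt (fun y => U (t, y)) (W (t, x)) x := hasDerivAt_slice_x hUd t x
    have hWy : HasDerivAt (fun y => W (t, y)) (pdx W (t, x)) x := hasDerivAt_slice_x hWd t x
    have hWxy : HasDerivAt (fun y => pdx W (t, y)) (pdx (pdx W) (t, x)) x :=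
      hasDerivAt_slice_x hWxd t x
    have hfc : HasDerivAt (deriv f) (iteratedDeriv 2 f (U (t, x))) (U (t, x)) := by
      have h := (hf'd (U (t, x))).hasDerivAt
      rwa [show iteratedDeriv 2 f (U (t, x)) = deriv (deriv f) (U (t, x)) by
        rw [show (2:ℕ) = 1 + 1 from rfl, iteratedDeriv_succ, iteratedDeriv_one]]
    have hcomp : HasDerivAt (fun y => deriv f (U (t, y)))
        (iteratedDeriv 2 f (U (t, x)) * W (t, x)) x := hfc.comp x hUy
    have hR : HasDerivAt (fun y => ν * pdx W (t, y) - deriv f (U (t, y)) * W (t, y))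
        (ν * pdx (pdx W) (t, x) -
          (iteratedDeriv 2 f (U (t, x)) * W (t, x) * W (t, x)
            + deriv f (U (t, x)) * pdx W (t, x))) x :=
      (hWxy.const_mul ν).sub (hcomp.mul hWy)
    have hEq : (fun y => pdt U (t, y))
        = fun y => ν * pdx W (t, y) - deriv f (U (t, y)) * W (t, y) :=
      funext fun y => hPDE t ht y
    have hval : pdx (pdt U) (t, x) = ν * pdx (pdx W) (t, x) -
        (iteratedDeriv 2 f (U (t, x)) * W (t, x) * W (t, x)
          + deriv f (U (t, x)) * pdx W (t, x)) :=
      hL.unique (by rw [hEq]; exact hR)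
    have hmix : pdt W (t, x) = pdx (pdt U) (t, x) := pdt_pdx_comm hU (t, x)
    have hσle := hconv (U (t, x))
    have hWsq : (0:ℝ) ≤ W (t, x) ^ 2 := sq_nonneg _
    rw [hmix, hval, hg1]
    nlinarith [mul_le_mul_of_nonneg_left hg2 hν.le,
      mul_le_mul_of_nonneg_right hσle hWsq]
  -- Step C: maximum principle
  have main : ∀ ε : ℝ, 0 < ε → W (t₀, x₀) < (σ * t₀)⁻¹ + ε := by
    intro ε hε
    by_contra hcon
    push_neg at hcon
    -- spatial periodicity of W
    have hWper : ∀ t, Function.Periodic (fun y => W (t, y)) 1 := by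
      intro t y
      have hfun : (fun z => u t (z + 1)) = u t := funext fun z => hper t z
      have h1 : deriv (u t) (y + 1) = deriv (u t) y := by
        calc deriv (u t) (y + 1) = deriv (fun z => u t (z + 1)) y :=
              (deriv_comp_add_const (u t) 1 y).symm
          _ = deriv (u t) y := by rw [hfun]
      show W (t, y + 1) = W (t, y)
      rw [← hslice, ← hslice]
      exact h1
    have hWfract : ∀ t y, W (t, y) = W (t, Int.fract y) := by
      intro t y
      have h := (hWper t).sub_int_mul_eq (x := y) (n := ⌊y⌋)
      rw [mul_one] at h
      exact h.symm
    -- bound on compact set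
    obtain ⟨M, hM⟩ := (isCompact_Icc.prod isCompact_Icc :
        IsCompact (Icc 0 t₀ ×ˢ Icc (0:ℝ) 1)).exists_bound_of_continuousOn
      hWsm.continuous.continuousOn
    set δ := min t₀ (σ⁻¹ * (|M| + 1)⁻¹) with hδdef
    have hδpos : 0 < δ := lt_min ht₀ (by positivity)
    have hδt₀ : δ ≤ t₀ := min_le_left _ _
    have hinvδ : |M| + 1 ≤ (σ * δ)⁻¹ := by
      have h1 : 0 < σ * δ := by positivity
      have h2 : δ ≤ σ⁻¹ * (|M| + 1)⁻¹ := min_le_right _ _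
      have h3 : σ * δ ≤ (|M| + 1)⁻¹ := by
        calc σ * δ ≤ σ * (σ⁻¹ * (|M| + 1)⁻¹) := by
              exact mul_le_mul_of_nonneg_left h2 hσ.le
          _ = (|M| + 1)⁻¹ := by field_simp
      have h4 := inv_anti₀ h1 h3
      rwa [inv_inv] at h4
    -- the comparison function and F
    set φ : ℝ → ℝ := fun t => (σ * max t δ)⁻¹ + ε with hφdef
    set F : ℝ × ℝ → ℝ := fun q => W q - φ q.1 with hFdef
    have hmaxpos : ∀ t : ℝ, 0 < σ * max t δ := fun t =>
      mul_pos hσ (lt_of_lt_of_le hδpos (le_max_right _ _))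
    have hφcont : Continuous φ := ((continuous_const.mul
      (continuous_id.max continuous_const)).inv₀ fun t => (hmaxpos t).ne').add
      continuous_const
    have hFcont : Continuous F := hWsm.continuous.sub (hφcont.comp continuous_fst)
    set K₂ := (Icc δ t₀ ×ˢ Icc (0:ℝ) 1) ∩ {q : ℝ × ℝ | 0 ≤ F q} with hK₂def
    have hK₂cpt : IsCompact K₂ := (isCompact_Icc.prod isCompact_Icc).inter_right
      (isClosed_le continuous_const hFcont)
    have hx₁ : (t₀, Int.fract x₀) ∈ K₂ := by
      refine ⟨⟨⟨hδt₀, le_rfl⟩, ⟨Int.fract_nonneg _, (Int.fract_lt_one _).le⟩⟩, ?_⟩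
      show 0 ≤ W (t₀, Int.fract x₀) - φ t₀
      rw [← hWfract]
      have hm : max t₀ δ = t₀ := max_eq_left hδt₀
      simp only [hφdef, hm]
      linarith
    set S := Prod.fst '' K₂ with hSdef
    have hScpt : IsCompact S := hK₂cpt.image continuous_fst
    have hSne : S.Nonempty := ⟨t₀, ⟨_, hx₁, rfl⟩⟩
    set ts := sInf S with htsdef
    have htsS : ts ∈ S := hScpt.sInf_mem hSne
    obtain ⟨q₁, hq₁K, hq₁⟩ := htsS
    obtain ⟨a₁, b₁⟩ := q₁
    simp only at hq₁
    subst hq₁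
    have htsIcc : ts ∈ Icc δ t₀ := hq₁K.1.1
    have hts0 : 0 < ts := hδpos.trans_le htsIcc.1
    -- F (δ, ·) < 0 on [0,1]
    have hFδ : ∀ x' ∈ Icc (0:ℝ) 1, F (δ, x') < 0 := by
      intro x' hx'
      have hWb : ‖W (δ, x')‖ ≤ M := hM (δ, x') ⟨⟨hδpos.le, hδt₀⟩, hx'⟩
      have hWle : W (δ, x') ≤ |M| := le_trans (le_trans (le_abs_self _) hWb)
        (le_abs_self M)
      show W (δ, x') - φ δ < 0
      have hm : max δ δ = δ := max_self δ
      simp only [hφdef, hm]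
      linarith
    have htsδ : δ < ts := by
      rcases lt_or_eq_of_le htsIcc.1 with h | h
      · exact h
      · exfalso
        have h1 := hFδ b₁ hq₁K.1.2
        rw [← h] at hq₁K
        have h2 : 0 ≤ F (δ, b₁) := hq₁K.2
        linarith
    -- the spatial argmax
    have hcontx : ContinuousOn (fun x => F (ts, x)) (Icc 0 1) :=
      (hFcont.comp (continuous_const.prodMk continuous_id)).continuousOn
    obtain ⟨xs, hxsIcc, hxsmax⟩ := isCompact_Icc.exists_isMaxOn
      (nonempty_Icc.mpr zero_le_one) hcontx
    have hFxs : 0 ≤ F (ts, xs) := le_trans hq₁K.2 (hxsmax hq₁K.1.2)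
    -- xs is a global spatial max of W (ts, ·)
    have hlm : IsLocalMax (fun y => W (ts, y)) xs := by
      apply Filter.Eventually.of_forall
      intro y
      have h1 : W (ts, y) = W (ts, Int.fract y) := hWfract ts y
      have h2 : F (ts, Int.fract y) ≤ F (ts, xs) :=
        hxsmax ⟨Int.fract_nonneg _, (Int.fract_lt_one _).le⟩
      simp only [hFdef] at h2
      show W (ts, y) ≤ W (ts, xs)
      rw [h1]
      linarith
    have hineq := hkey ts xs hts0.le hlm
    -- derivative in time at (ts, xs)
    have hφts : φ ts = (σ * ts)⁻¹ + ε := by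
      simp only [hφdef, max_eq_left htsIcc.1]
    have hWt : HasDerivAt (fun s => W (s, xs)) (pdt W (ts, xs)) ts :=
      hasDerivAt_slice_t hWd ts xs
    have hφder : HasDerivAt φ (-(σ * 1) / (σ * ts) ^ 2) ts := by
      have hbase : HasDerivAt (fun s : ℝ => σ * s) (σ * 1) ts :=
        (hasDerivAt_id ts).const_mul σ
      have hne : σ * ts ≠ 0 := (mul_pos hσ hts0).ne'
      have hinv : HasDerivAt (fun s => (σ * s)⁻¹) (-(σ * 1) / (σ * ts) ^ 2) ts :=
        hbase.inv hne
      have hev : φ =ᶠ[nhds ts] fun s => (σ * s)⁻¹ + ε := by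
        filter_upwards [eventually_gt_nhds htsδ] with s hs
        simp only [hφdef, max_eq_left hs.le]
      exact (hinv.add_const ε).congr_of_eventuallyEq hev
    have hFder : HasDerivAt (fun s => F (s, xs))
        (pdt W (ts, xs) - -(σ * 1) / (σ * ts) ^ 2) ts := hWt.sub hφder
    have hge : 0 ≤ pdt W (ts, xs) - -(σ * 1) / (σ * ts) ^ 2 := by
      apply deriv_nonneg_of_left_le hFder
      filter_upwards [Ioo_mem_nhdsLT_of_mem (⟨htsδ, le_rfl⟩ : ts ∈ Ioc δ ts)]
        with s hs
      show F (s, xs) ≤ F (ts, xs)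
      by_contra hlt
      push_neg at hlt
      have h0 : 0 ≤ F (s, xs) := le_trans hFxs hlt.le
      have hsS : s ∈ S := ⟨(s, xs),
        ⟨⟨⟨hs.1.le, hs.2.le.trans htsIcc.2⟩, hxsIcc⟩, h0⟩, rfl⟩
      have := csInf_le hScpt.bddBelow hsS
      have h2 := hs.2
      rw [← htsdef] at this
      linarith
    -- combine everything
    have hWlb : (σ * ts)⁻¹ + ε ≤ W (ts, xs) := by
      have : 0 ≤ W (ts, xs) - φ ts := hFxs
      rw [hφts] at this
      linarith
    have ha : 0 < (σ * ts)⁻¹ := inv_pos.mpr (mul_pos hσ hts0)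
    have hrel : -(σ * 1) / (σ * ts) ^ 2 = -(σ * ((σ * ts)⁻¹) ^ 2) := by
      have hne : σ * ts ≠ 0 := (mul_pos hσ hts0).ne'
      field_simp
    rw [hrel] at hge
    set a := (σ * ts)⁻¹
    have hW2 : (a + ε) ^ 2 ≤ W (ts, xs) ^ 2 := by nlinarith
    nlinarith [mul_le_mul_of_nonneg_left hW2 hσ.le, mul_pos hσ (mul_pos ha hε),
      mul_pos hσ (mul_pos hε hε)]
  exact le_of_forall_pos_lt_add main





end Oleinik

section SpaceEstimates

variable {v : ℝ → ℝ} {K ℓ : ℝ}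

lemma deriv_int_zero (hv : ContDiff ℝ (⊤ : ℕ∞) v) (hper : Function.Periodic v 1) :
    (∫ x in (0:ℝ)..1, deriv v x) = 0 := by
  rw [integral_deriv_eq_sub (fun x _ => (hv.differentiable (by simp)).differentiableAt)
    ((hv.continuous_deriv (by exact_mod_cast le_top)).intervalIntegrable 0 1)]
  have := hper 0
  rw [zero_add] at this
  rw [this, sub_self]

lemma abs_deriv_int_le (hv : ContDiff ℝ (⊤ : ℕ∞) v) (hper : Function.Periodic v 1)
    (hK : 0 ≤ K) (hbound : ∀ x, deriv v x ≤ K) :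
    (∫ x in (0:ℝ)..1, |deriv v x|) ≤ 2 * K := by
  have hcd : Continuous (deriv v) := hv.continuous_deriv (by exact_mod_cast le_top)
  have h1 : (∫ x in (0:ℝ)..1, |deriv v x|)
      = (∫ x in (0:ℝ)..1, (2 * max (deriv v x) 0 - deriv v x)) := by
    congr 1
    funext x
    rcases le_or_gt 0 (deriv v x) with h | h
    · rw [abs_of_nonneg h, max_eq_left h]; ring
    · rw [abs_of_neg h, max_eq_right h.le]; ring
  have hc2 : Continuous fun x => 2 * max (deriv v x) 0 :=
    continuous_const.mul (hcd.max continuous_const)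
  rw [h1, integral_sub (hc2.intervalIntegrable 0 1)
    (hcd.intervalIntegrable 0 1), deriv_int_zero hv hper, sub_zero]
  have h2 : (∫ x in (0:ℝ)..1, 2 * max (deriv v x) 0) ≤ ∫ x in (0:ℝ)..1, 2 * K := by
    apply integral_mono_on zero_le_one
      (hc2.intervalIntegrable 0 1)
      (continuous_const.intervalIntegrable 0 1)
    intro x _
    have : max (deriv v x) 0 ≤ K := max_le (hbound x) hK
    linarith
  simpa using h2

lemma abs_deriv_periodic (hper : Function.Periodic v 1) :
    Function.Periodic (fun x => |deriv v x|) 1 := by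
  intro x
  have hfun : (fun z => v (z + 1)) = v := funext fun z => hper z
  have h1 : deriv v (x + 1) = deriv v x := by
    calc deriv v (x + 1) = deriv (fun z => v (z + 1)) x := (deriv_comp_add_const v 1 x).symm
      _ = deriv v x := by rw [hfun]
  simp [h1]

lemma abs_deriv_int_window (hv : ContDiff ℝ (⊤ : ℕ∞) v) (hper : Function.Periodic v 1)
    (x : ℝ) : (∫ y in x..(x+1), |deriv v y|) = ∫ y in (0:ℝ)..1, |deriv v y| := by
  have := (abs_deriv_periodic hper).intervalIntegral_add_eq x 0
  simpa using this

lemma delta_pointwise (hv : ContDiff ℝ (⊤ : ℕ∞) v) (hper : Function.Periodic v 1)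
    (hℓ : ℓ ∈ Icc (0:ℝ) 1) (x : ℝ) :
    |v (x + ℓ) - v x| ≤ ∫ y in (0:ℝ)..1, |deriv v y| := by
  have hcd : Continuous (deriv v) := hv.continuous_deriv (by exact_mod_cast le_top)
  have hftc : v (x + ℓ) - v x = ∫ y in x..(x+ℓ), deriv v y := by
    rw [integral_deriv_eq_sub (fun y _ => (hv.differentiable (by simp)).differentiableAt)
      (hcd.intervalIntegrable _ _)]
  rw [hftc]
  calc |∫ y in x..(x+ℓ), deriv v y| ≤ ∫ y in x..(x+ℓ), |deriv v y| :=
        abs_integral_le_integral_abs (by linarith [hℓ.1])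
    _ ≤ ∫ y in x..(x+1), |deriv v y| := by
        apply integral_mono_interval le_rfl (by linarith [hℓ.1]) (by linarith [hℓ.2])
        · filter_upwards with y using abs_nonneg _
        · exact hcd.abs.intervalIntegrable _ _
    _ = ∫ y in (0:ℝ)..1, |deriv v y| := abs_deriv_int_window hv hper x

/-- `∫_0^1 |v(x+ℓ)-v(x)| dx ≤ ℓ ∫_0^1 |v'|`, proved via the primitive of `|v'|`. -/
lemma delta_int_le (hv : ContDiff ℝ (⊤ : ℕ∞) v) (hper : Function.Periodic v 1)
    (hℓ : ℓ ∈ Icc (0:ℝ) 1) :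
    (∫ x in (0:ℝ)..1, |v (x + ℓ) - v x|) ≤ ℓ * ∫ y in (0:ℝ)..1, |deriv v y| := by
  have hcd : Continuous (deriv v) := hv.continuous_deriv (by exact_mod_cast le_top)
  have hvd : Differentiable ℝ v := hv.differentiable (by simp)
  set V : ℝ → ℝ := fun x => ∫ y in (0:ℝ)..x, |deriv v y| with hVdef
  have hVcont : Continuous V :=
    intervalIntegral.continuous_primitive (fun a b => hcd.abs.intervalIntegrable a b) 0
  have hVdiff : ∀ a b : ℝ, V b - V a = ∫ y in a..b, |deriv v y| := by
    intro a b
    rw [hVdef]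
    simp only
    rw [← intervalIntegral.integral_add_adjacent_intervals
      (hcd.abs.intervalIntegrable 0 a) (hcd.abs.intervalIntegrable a b)]
    ring
  -- pointwise bound by the primitive increment
  have hpt : ∀ x, |v (x + ℓ) - v x| ≤ V (x + ℓ) - V x := by
    intro x
    have hftc : v (x + ℓ) - v x = ∫ y in x..(x+ℓ), deriv v y := by
      rw [integral_deriv_eq_sub (fun y _ => hvd.differentiableAt)
        (hcd.intervalIntegrable _ _)]
    rw [hftc, hVdiff]
    exact abs_integral_le_integral_abs (by linarith [hℓ.1])
  have hcVs : Continuous fun x => V (x + ℓ) := hVcont.comp (continuous_add_right ℓ)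
  have hcV1 : Continuous fun x => V (x + 1) := hVcont.comp (continuous_add_right 1)
  have hcvs : Continuous fun x => |v (x + ℓ) - v x| :=
    ((hv.continuous.comp (continuous_add_right ℓ)).sub hv.continuous).abs
  have hint : (∫ x in (0:ℝ)..1, |v (x + ℓ) - v x|)
      ≤ ∫ x in (0:ℝ)..1, (V (x + ℓ) - V x) := by
    apply integral_mono_on zero_le_one (hcvs.intervalIntegrable 0 1)
      ((hcVs.sub hVcont).intervalIntegrable 0 1)
    exact fun x _ => hpt x
  refine hint.trans ?_
  have hVint : ∀ a b : ℝ, IntervalIntegrable V volume a b := fun a b =>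
    hVcont.intervalIntegrable a b
  have hshift : (∫ x in (0:ℝ)..1, V (x + ℓ)) = ∫ x in ℓ..(1+ℓ), V x := by
    rw [intervalIntegral.integral_comp_add_right]
    norm_num [add_comm]
  have h1 : (∫ x in (0:ℝ)..1, (V (x + ℓ) - V x))
      = (∫ x in ℓ..(1+ℓ), V x) - ∫ x in (0:ℝ)..1, V x := by
    rw [integral_sub (hcVs.intervalIntegrable 0 1) (hVint 0 1), hshift]
  rw [h1]
  have h2 : (∫ x in ℓ..(1+ℓ), V x) - (∫ x in (0:ℝ)..1, V x)
      = (∫ x in (1:ℝ)..(1+ℓ), V x) - ∫ x in (0:ℝ)..ℓ, V x := by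
    have e1 : (∫ x in ℓ..(1:ℝ), V x) + (∫ x in (1:ℝ)..(1+ℓ), V x)
        = ∫ x in ℓ..(1+ℓ), V x :=
      intervalIntegral.integral_add_adjacent_intervals (hVint _ _) (hVint _ _)
    have e2 : (∫ x in (0:ℝ)..ℓ, V x) + (∫ x in ℓ..(1:ℝ), V x)
        = ∫ x in (0:ℝ)..1, V x :=
      intervalIntegral.integral_add_adjacent_intervals (hVint _ _) (hVint _ _)
    rw [← e1, ← e2]; ring
  rw [h2]
  have h3 : (∫ x in (0:ℝ)..ℓ, V (x + 1)) = ∫ x in (1:ℝ)..(1+ℓ), V x := by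
    rw [intervalIntegral.integral_comp_add_right]
    norm_num [add_comm]
  rw [← h3, ← integral_sub (hcV1.intervalIntegrable 0 ℓ) (hVint 0 ℓ)]
  have h4 : ∀ x, V (x + 1) - V x = ∫ y in (0:ℝ)..1, |deriv v y| := by
    intro x
    rw [hVdiff]
    exact abs_deriv_int_window hv hper x
  calc (∫ x in (0:ℝ)..ℓ, (V (x + 1) - V x))
      = ∫ x in (0:ℝ)..ℓ, (∫ y in (0:ℝ)..1, |deriv v y|) := by
        congr 1; funext x; exact h4 x
    _ = ℓ * ∫ y in (0:ℝ)..1, |deriv v y| := by simp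
    _ ≤ ℓ * ∫ y in (0:ℝ)..1, |deriv v y| := le_rfl

end SpaceEstimates



lemma rpow_ge_one_bound {r B p : ℝ} (hr : 0 ≤ r) (hB : 0 < B) (hrB : r ≤ B)
    (hp : 1 ≤ p) : r ^ p ≤ B ^ (p - 1) * r := by
  rcases eq_or_lt_of_le hr with h0 | h0
  · rw [← h0, Real.zero_rpow (by linarith : p ≠ 0), mul_zero]
  · have h1 : r ^ p = r ^ (p - 1) * r := by
      rw [← Real.rpow_add_one h0.ne' (p - 1)]
      ring_nf
    rw [h1]
    exact mul_le_mul_of_nonneg_right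
      (Real.rpow_le_rpow hr hrB (by linarith)) hr
lemma rpow_le_one_bound {r B p : ℝ} (hr : 0 ≤ r) (hB : 0 < B) (hp0 : 0 < p)
    (hp : p ≤ 1) : r ^ p ≤ B ^ p + r * B ^ (p - 1) := by
  rcases le_or_gt r B with h | h
  · have h1 : r ^ p ≤ B ^ p := Real.rpow_le_rpow hr h hp0.le
    have h2 : 0 ≤ r * B ^ (p - 1) := by positivity
    linarith
  · have hr0 : 0 < r := hB.trans h
    have h1 : r ^ p = r ^ (p - 1) * r := by
      rw [← Real.rpow_add_one hr0.ne' (p - 1)]; ring_nf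
    have h2 : r ^ (p - 1) ≤ B ^ (p - 1) :=
      Real.rpow_le_rpow_of_nonpos hB h.le (by linarith)
    have h3 : 0 ≤ B ^ p := (Real.rpow_pos_of_pos hB p).le
    nlinarith [mul_le_mul_of_nonneg_right h2 hr0.le]
lemma tavg_le_aux {g : ℝ → ℝ} {c T₁ T₂ : ℝ} (h : T₁ < T₂) (hg : Continuous g)
    (hle : ∀ t ∈ Icc T₁ T₂, g t ≤ c) :
    (T₂ - T₁)⁻¹ * ∫ t in T₁..T₂, g t ≤ c := by
  have h1 : (∫ t in T₁..T₂, g t) ≤ ∫ t in T₁..T₂, c :=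
    integral_mono_on h.le (hg.intervalIntegrable _ _)
      (continuous_const.intervalIntegrable _ _) hle
  rw [intervalIntegral.integral_const, smul_eq_mul] at h1
  have hpos : 0 < T₂ - T₁ := sub_pos.mpr h
  calc (T₂ - T₁)⁻¹ * ∫ t in T₁..T₂, g t ≤ (T₂ - T₁)⁻¹ * ((T₂ - T₁) * c) :=
        mul_le_mul_of_nonneg_left h1 (inv_nonneg.mpr hpos.le)
    _ = c := by field_simp

lemma time_slice_bound {v : ℝ → ℝ} (hv : ContDiff ℝ (⊤ : ℕ∞) v)
    (hper : Function.Periodic v 1) {K ℓ p : ℝ} (hK : 0 ≤ K)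
    (hbound : ∀ x, deriv v x ≤ K) (hℓ : ℓ ∈ Icc (0:ℝ) 1) (hp : 0 ≤ p) :
    (p ≤ 1 → (∫ x in (0:ℝ)..1, |v (x + ℓ) - v x| ^ p)
        ≤ (2 * (2 * K + 1) ^ p + 1) * ℓ ^ p) ∧
    (1 ≤ p → (∫ x in (0:ℝ)..1, |v (x + ℓ) - v x| ^ p)
        ≤ (2 * (2 * K + 1) ^ p + 1) * ℓ) := by
  set B := 2 * K + 1 with hBdef
  have hB : 0 < B := by simp only [hBdef]; linarith
  have hBp : 0 < B ^ p := Real.rpow_pos_of_pos hB p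
  have hw1 : (∫ y in (0:ℝ)..1, |deriv v y|) ≤ 2 * K :=
    abs_deriv_int_le hv hper hK hbound
  have hw0 : 0 ≤ ∫ y in (0:ℝ)..1, |deriv v y| :=
    intervalIntegral.integral_nonneg zero_le_one (fun y _ => abs_nonneg _)
  have hpt : ∀ x, |v (x + ℓ) - v x| ≤ B := fun x =>
    le_trans (le_trans (delta_pointwise hv hper hℓ x) hw1) (by simp only [hBdef]; linarith)
  have hint : (∫ x in (0:ℝ)..1, |v (x + ℓ) - v x|) ≤ B * ℓ := by
    have h1 := delta_int_le hv hper hℓ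
    have h2 : ℓ * (∫ y in (0:ℝ)..1, |deriv v y|) ≤ ℓ * (2 * K) :=
      mul_le_mul_of_nonneg_left hw1 hℓ.1
    have h3 : ℓ * (2 * K) ≤ B * ℓ := by
      simp only [hBdef]; nlinarith [hℓ.1]
    linarith
  have hcvs : Continuous fun x => |v (x + ℓ) - v x| :=
    ((hv.continuous.comp (continuous_add_right ℓ)).sub hv.continuous).abs
  have hδ0 : ∀ x, (0:ℝ) ≤ |v (x + ℓ) - v x| := fun x => abs_nonneg _
  have hcont : Continuous fun x => |v (x + ℓ) - v x| ^ p :=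
    hcvs.rpow_const (fun x => Or.inr hp)
  rcases eq_or_lt_of_le hp with hp0 | hp0
  · -- p = 0
    have hp0' : p = 0 := hp0.symm
    subst hp0'
    constructor
    · intro _
      simp only [Real.rpow_zero]
      rw [intervalIntegral.integral_const, smul_eq_mul]
      norm_num
    · intro h1; exfalso; linarith
  · constructor
    · -- the case p ≤ 1
      intro hple
      rcases eq_or_lt_of_le hℓ.1 with hℓ0 | hℓ0
      · have hℓ0' : ℓ = 0 := hℓ0.symm
        subst hℓ0'
        simp [Real.zero_rpow hp0.ne']
      · have hBl : 0 < B * ℓ := mul_pos hB hℓ0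
        have hptw : ∀ x, |v (x + ℓ) - v x| ^ p
            ≤ (B * ℓ) ^ p + |v (x + ℓ) - v x| * (B * ℓ) ^ (p - 1) := fun x =>
          rpow_le_one_bound (hδ0 x) hBl hp0 hple
        have hmono : (∫ x in (0:ℝ)..1, |v (x + ℓ) - v x| ^ p)
            ≤ ∫ x in (0:ℝ)..1,
              ((B * ℓ) ^ p + |v (x + ℓ) - v x| * (B * ℓ) ^ (p - 1)) :=
          intervalIntegral.integral_mono_on zero_le_one
            (hcont.intervalIntegrable _ _)
            ((continuous_const.add (hcvs.mul continuous_const)).intervalIntegrable _ _)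
            (fun x _ => hptw x)
        have hcomp : (∫ x in (0:ℝ)..1,
              ((B * ℓ) ^ p + |v (x + ℓ) - v x| * (B * ℓ) ^ (p - 1)))
            = (B * ℓ) ^ p
              + (∫ x in (0:ℝ)..1, |v (x + ℓ) - v x|) * (B * ℓ) ^ (p - 1) := by
          rw [intervalIntegral.integral_add (f := fun _ => (B * ℓ) ^ p)
            (g := fun x => |v (x + ℓ) - v x| * (B * ℓ) ^ (p - 1))
            (continuous_const.intervalIntegrable _ _)
            ((hcvs.mul continuous_const).intervalIntegrable _ _),
            intervalIntegral.integral_mul_const, intervalIntegral.integral_const,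
            smul_eq_mul]
          norm_num
        have h2 : (∫ x in (0:ℝ)..1, |v (x + ℓ) - v x|) * (B * ℓ) ^ (p - 1)
            ≤ (B * ℓ) * (B * ℓ) ^ (p - 1) :=
          mul_le_mul_of_nonneg_right hint (Real.rpow_nonneg hBl.le _)
        have h3 : (B * ℓ) * (B * ℓ) ^ (p - 1) = (B * ℓ) ^ p := by
          rw [mul_comm (B * ℓ) ((B * ℓ) ^ (p - 1)), ← Real.rpow_add_one hBl.ne' (p - 1)]
          ring_nf
        have h4 : (B * ℓ) ^ p = B ^ p * ℓ ^ p := Real.mul_rpow hB.le hℓ.1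
        have h5 : (0:ℝ) ≤ ℓ ^ p := Real.rpow_nonneg hℓ.1 p
        rw [hcomp] at hmono
        nlinarith
    · -- the case p ≥ 1
      intro hpge
      have hptw : ∀ x, |v (x + ℓ) - v x| ^ p
          ≤ B ^ (p - 1) * |v (x + ℓ) - v x| := fun x =>
        rpow_ge_one_bound (hδ0 x) hB (hpt x) hpge
      have hmono : (∫ x in (0:ℝ)..1, |v (x + ℓ) - v x| ^ p)
          ≤ ∫ x in (0:ℝ)..1, B ^ (p - 1) * |v (x + ℓ) - v x| :=
        intervalIntegral.integral_mono_on zero_le_one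
          (hcont.intervalIntegrable _ _)
          ((continuous_const.mul hcvs).intervalIntegrable _ _)
          (fun x _ => hptw x)
      rw [intervalIntegral.integral_const_mul] at hmono
      have h2 : B ^ (p - 1) * (∫ x in (0:ℝ)..1, |v (x + ℓ) - v x|)
          ≤ B ^ (p - 1) * (B * ℓ) :=
        mul_le_mul_of_nonneg_left hint (Real.rpow_nonneg hB.le _)
      have h3 : B ^ (p - 1) * (B * ℓ) = B ^ p * ℓ := by
        rw [show B ^ (p-1) * (B * ℓ) = (B ^ (p-1) * B) * ℓ by ring,
          ← Real.rpow_add_one hB.ne' (p - 1)]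
        norm_num
      have h5 : 0 ≤ ℓ := hℓ.1
      nlinarith



/-- Improved upper bounds for structure functions. -/
theorem stmt9 (f : ℝ → ℝ) (σ : ℝ)
    (hf : ContDiff ℝ (⊤ : ℕ∞) f) (hσ : 0 < σ)
    (hconv : ∀ x, σ ≤ iteratedDeriv 2 f x) (D Ct : ℝ) (hCt : 0 < Ct)
    (p : ℝ) (hp : 0 ≤ p) :
    ∃ C, 0 < C ∧ ∀ ν ∈ Ioc (0:ℝ) 1, ∀ u : ℝ → ℝ → ℝ,
      BurgersSol f ν u → Dparam (u 0) = D →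
      (∀ t, 0 ≤ t → (circH 1 (u t))^2 ≤ Ct * ν⁻¹) →
      ∀ ℓ ∈ Icc (0:ℝ) 1,
        (p ≤ 1 → Sfun σ D Ct u p ℓ ≤ C * ℓ ^ p) ∧
        (1 ≤ p → Sfun σ D Ct u p ℓ ≤ C * ℓ) := by
  by_cases hD0 : D = 0
  · subst hD0
    refine ⟨1, one_pos, ?_⟩
    intro ν hν u hB hD hcirc ℓ hℓ
    have hT1 : Tone 0 Ct = 0 := by simp [Tone]
    have hT2 : Ttwo σ 0 Ct = 0 := by simp [Ttwo, hT1]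
    have hS : Sfun σ 0 Ct u p ℓ = 0 := by
      unfold Sfun tavg
      rw [hT1, hT2, intervalIntegral.integral_same]
      simp
    rw [hS]
    have hℓp : (0:ℝ) ≤ ℓ ^ p := Real.rpow_nonneg hℓ.1 p
    exact ⟨fun _ => by linarith, fun _ => by linarith [hℓ.1]⟩
  · have hD2 : 0 < D ^ 2 :=
      lt_of_le_of_ne (sq_nonneg D) (Ne.symm (pow_ne_zero 2 hD0))
    set T₁ := Tone D Ct with hT₁def
    have hT₁pos : 0 < T₁ := by
      rw [hT₁def]; unfold Tone; positivity
    set T₂ := Ttwo σ D Ct with hT₂def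
    have hT₂eq : T₂ = max ((3/2) * T₁) (2 * D * σ⁻¹) := by
      rw [hT₂def, hT₁def]; rfl
    have hT₁₂ : T₁ < T₂ := by
      have h1 := le_max_left ((3/2) * T₁) (2 * D * σ⁻¹)
      rw [← hT₂eq] at h1
      linarith
    set K := (σ * T₁)⁻¹ with hKdef
    have hKpos : 0 < K := by rw [hKdef]; positivity
    refine ⟨2 * (2 * K + 1) ^ p + 1, by positivity, ?_⟩
    intro ν hν u hB hD hcirc ℓ hℓ
    have hU : ContDiff ℝ (⊤:ℕ∞) (fun q : ℝ × ℝ => u q.1 q.2) := hB.1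
    have hUd : Differentiable ℝ (fun q : ℝ × ℝ => u q.1 q.2) :=
      hU.differentiable (by simp)
    have hut : ∀ t, ContDiff ℝ (⊤:ℕ∞) (u t) := fun t =>
      hU.comp ((contDiff_const (c := t)).prodMk contDiff_id)
    have hbound : ∀ t ∈ Icc T₁ T₂, ∀ x, deriv (u t) x ≤ K := by
      intro t ht x
      have h1 : deriv (u t) x = pdx (fun q : ℝ × ℝ => u q.1 q.2) (t, x) :=
        (hasDerivAt_slice_x hUd t x).deriv
      have h2 := oleinik hf hσ hconv hν.1 hB (lt_of_lt_of_le hT₁pos ht.1) x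
      have h3 : (σ * t)⁻¹ ≤ K := by
        rw [hKdef]
        exact inv_anti₀ (by positivity)
          (mul_le_mul_of_nonneg_left ht.1 hσ.le)
      rw [h1]; exact h2.trans h3
    have hSeq : Sfun σ D Ct u p ℓ = (T₂ - T₁)⁻¹ *
        ∫ t in T₁..T₂, (∫ x in (0:ℝ)..1, |u t (x + ℓ) - u t x| ^ p) := rfl
    have hgcont : Continuous fun t => ∫ x in (0:ℝ)..1, |u t (x + ℓ) - u t x| ^ p := by
      have hc : Continuous fun q : ℝ × ℝ => |u q.1 (q.2 + ℓ) - u q.1 q.2| ^ p :=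
        ((hU.continuous.comp (continuous_fst.prodMk
          (continuous_snd.add continuous_const))).sub
          hU.continuous).abs.rpow_const (fun q => Or.inr hp)
      exact intervalIntegral.continuous_parametric_intervalIntegral_of_continuous'
        (f := fun t x => |u t (x + ℓ) - u t x| ^ p) (by exact hc) 0 1
    constructor
    · intro hple
      rw [hSeq]
      apply tavg_le_aux hT₁₂ hgcont
      intro t ht
      exact (time_slice_bound (hut t) (hB.2.1 t) hKpos.le (hbound t ht) hℓ hp).1 hple
    · intro hpge
      rw [hSeq]
      apply tavg_le_aux hT₁₂ hgcont
      intro t ht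
      exact (time_slice_bound (hut t) (hB.2.1 t) hKpos.le (hbound t ht) hℓ hp).2 hpge


end AuxProofs
end
end

section
/- L¹ contraction for the forced generalised Burgers equation: let η : [0,∞) × S¹ → ℝ be a continuous function which is C^∞ in the space variable, and let u and ū be two C^∞ solutions on [0,∞) × S¹ of the equation v_t + f'(v)v_x = ν v_xx + η (with the same force η but possibly different initial conditions). Then for all t ≥ 0, ∫_{S¹} |u(t,x) − ū(t,x)| dx ≤ ∫_{S¹} |u(0,x) − ū(0,x)| dx. -/
open MeasureTheory Set
open scoped ENNReal

noncomputable section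

namespace B19

def phi (ε y : ℝ) : ℝ := Real.sqrt (y^2 + ε^2)
def phi' (ε y : ℝ) : ℝ := y / Real.sqrt (y^2 + ε^2)
def phi'' (ε y : ℝ) : ℝ := ε^2 / (Real.sqrt (y^2 + ε^2))^3

variable {ε y : ℝ}

lemma sq_add_pos (hε : 0 < ε) (y : ℝ) : 0 < y^2 + ε^2 := by positivity

lemma sqrt_pos' (hε : 0 < ε) (y : ℝ) : 0 < Real.sqrt (y^2 + ε^2) :=
  Real.sqrt_pos.2 (sq_add_pos hε y)

lemma continuous_phi (ε : ℝ) : Continuous (phi ε) :=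
  Real.continuous_sqrt.comp (by continuity)

lemma hasDerivAt_phi (hε : 0 < ε) (y : ℝ) : HasDerivAt (phi ε) (phi' ε y) y := by
  have h1 : HasDerivAt (fun y : ℝ => y^2 + ε^2) (2*y) y := by
    simpa using ((hasDerivAt_pow 2 y).add_const (ε^2))
  have h2 := (Real.hasDerivAt_sqrt (ne_of_gt (sq_add_pos hε y))).comp y h1
  have hs0 := (sqrt_pos' hε y).ne'
  rw [show phi' ε y = 1 / (2 * Real.sqrt (y^2+ε^2)) * (2*y) from by
    rw [phi']; field_simp]
  exact h2

lemma hasDerivAt_phi' (hε : 0 < ε) (y : ℝ) : HasDerivAt (phi' ε) (phi'' ε y) y := by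
  have h1 : HasDerivAt (fun y : ℝ => y^2 + ε^2) (2*y) y := by
    simpa using ((hasDerivAt_pow 2 y).add_const (ε^2))
  have hs : HasDerivAt (fun y : ℝ => Real.sqrt (y^2 + ε^2))
      (2*y / (2 * Real.sqrt (y^2+ε^2))) y := h1.sqrt (ne_of_gt (sq_add_pos hε y))
  have h3 : HasDerivAt (phi' ε)
      ((1 * Real.sqrt (y^2+ε^2) - y * (2*y / (2 * Real.sqrt (y^2+ε^2)))) /
        (Real.sqrt (y^2+ε^2))^2) y :=
    (hasDerivAt_id y).div hs (ne_of_gt (sqrt_pos' hε y))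
  convert h3 using 1
  have hsp := sqrt_pos' hε y
  have hsq : (Real.sqrt (y^2+ε^2))^2 = y^2 + ε^2 := Real.sq_sqrt (sq_add_pos hε y).le
  set s := Real.sqrt (y^2+ε^2) with hsdef
  rw [phi'']
  rw [show (1 * s - y * (2*y/(2*s)))/s^2 = (s^2 - y^2)/s^3 from by
    field_simp, hsq, ← hsdef]
  ring_nf

lemma phi''_nonneg (ε y : ℝ) : 0 ≤ phi'' ε y := by
  unfold phi''; positivity

lemma abs_phi'_le (hε : 0 < ε) (y : ℝ) : |phi' ε y| ≤ 1 := by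
  rw [phi', abs_div, div_le_one (by simpa using abs_pos.2 (ne_of_gt (sqrt_pos' hε y)))]
  rw [abs_of_nonneg (Real.sqrt_nonneg _)]
  rw [← Real.sqrt_sq_eq_abs]
  exact Real.sqrt_le_sqrt (by nlinarith [sq_nonneg ε])

lemma phi''_mul_abs_le (hε : 0 < ε) (y : ℝ) : phi'' ε y * |y| ≤ 1 := by
  have hsp := sqrt_pos' hε y
  have hsq : (Real.sqrt (y^2+ε^2))^2 = y^2 + ε^2 := Real.sq_sqrt (sq_add_pos hε y).le
  rw [phi'', div_mul_eq_mul_div, div_le_one (by positivity)]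
  have h1 : |y| ≤ Real.sqrt (y^2+ε^2) := by
    rw [← Real.sqrt_sq_eq_abs]; exact Real.sqrt_le_sqrt (by nlinarith [sq_nonneg ε])
  have h2 : (y^2+ε^2) * Real.sqrt (y^2+ε^2) = (Real.sqrt (y^2+ε^2))^3 := by
    rw [show (Real.sqrt (y^2+ε^2))^3 = (Real.sqrt (y^2+ε^2))^2 * Real.sqrt (y^2+ε^2) from
      pow_succ _ 2, hsq]
  calc ε^2 * |y| ≤ (y^2 + ε^2) * Real.sqrt (y^2+ε^2) := by nlinarith [abs_nonneg y, sq_nonneg y]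
    _ = (Real.sqrt (y^2+ε^2))^3 := h2

lemma phi_sub_abs_le (hε : 0 < ε) (y : ℝ) : phi ε y - |y| ≤ ε := by
  have h : phi ε y ≤ |y| + ε := by
    rw [phi]
    have : Real.sqrt (y^2 + ε^2) ≤ Real.sqrt ((|y| + ε)^2) :=
      Real.sqrt_le_sqrt (by nlinarith [abs_nonneg y, sq_abs y])
    rwa [Real.sqrt_sq (by positivity)] at this
  linarith

lemma abs_le_phi (y : ℝ) : |y| ≤ phi ε y := by
  rw [phi, ← Real.sqrt_sq_eq_abs]
  exact Real.sqrt_le_sqrt (by nlinarith [sq_nonneg ε])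

lemma phi''_le (hε : 0 < ε) (hy : y ≠ 0) : phi'' ε y ≤ ε^2 / |y|^3 := by
  have h1 : |y| ≤ Real.sqrt (y^2+ε^2) := by
    rw [← Real.sqrt_sq_eq_abs]; exact Real.sqrt_le_sqrt (by nlinarith [sq_nonneg ε])
  have h2 : 0 < |y| := abs_pos.2 hy
  apply div_le_div_of_nonneg_left (by positivity) (by positivity)
  exact pow_le_pow_left₀ h2.le h1 3

lemma continuous_phi'' (hε : 0 < ε) : Continuous (phi'' ε) := by
  apply Continuous.div continuous_const
  · exact ((Real.continuous_sqrt.comp (by continuity)).pow 3)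
  · intro y; exact pow_ne_zero _ (ne_of_gt (sqrt_pos' hε y))

lemma continuous_phi' (hε : 0 < ε) : Continuous (phi' ε) := by
  apply Continuous.div continuous_id
  · exact Real.continuous_sqrt.comp (by continuity)
  · intro y; exact ne_of_gt (sqrt_pos' hε y)

lemma hasDerivAt_slice1 {F : ℝ × ℝ → ℝ} (hF : Differentiable ℝ F) (t x : ℝ) :
    HasDerivAt (fun s => F (s, x)) (fderiv ℝ F (t, x) (1, 0)) t := by
  have h := (hF (t, x)).hasFDerivAt
  have hline : HasDerivAt (fun s : ℝ => ((s, x) : ℝ × ℝ)) ((1 : ℝ), (0 : ℝ)) t :=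
    (hasDerivAt_id t).prodMk (hasDerivAt_const t x)
  exact (h.comp_hasDerivAt t hline)

lemma hasDerivAt_slice2 {F : ℝ × ℝ → ℝ} (hF : Differentiable ℝ F) (t x : ℝ) :
    HasDerivAt (fun y => F (t, y)) (fderiv ℝ F (t, x) (0, 1)) x := by
  have h := (hF (t, x)).hasFDerivAt
  have hline : HasDerivAt (fun y : ℝ => ((t, y) : ℝ × ℝ)) ((0 : ℝ), (1 : ℝ)) x :=
    (hasDerivAt_const x t).prodMk (hasDerivAt_id x)
  exact (h.comp_hasDerivAt x hline)

lemma periodic_deriv {g : ℝ → ℝ} (h : Function.Periodic g 1) :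
    Function.Periodic (deriv g) 1 := by
  intro x
  have h2 : (fun y => g (y + 1)) = g := funext h
  calc deriv g (x + 1) = deriv (fun y => g (y + 1)) x := (deriv_comp_add_const g 1 x).symm
    _ = deriv g x := by rw [h2]

/-! ### Objects for the L¹ contraction -/

def Wf (u v : ℝ → ℝ → ℝ) : ℝ × ℝ → ℝ := fun q => u q.1 q.2 - v q.1 q.2
def wtf (u v : ℝ → ℝ → ℝ) : ℝ × ℝ → ℝ := fun q => fderiv ℝ (Wf u v) q (1, 0)
def wxf (u v : ℝ → ℝ → ℝ) : ℝ × ℝ → ℝ := fun q => fderiv ℝ (Wf u v) q (0, 1)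
def Gf (f : ℝ → ℝ) (u v : ℝ → ℝ → ℝ) : ℝ × ℝ → ℝ :=
  fun q => f (u q.1 q.2) - f (v q.1 q.2)
def AA (u v : ℝ → ℝ → ℝ) (e t x : ℝ) : ℝ := phi' e (Wf u v (t, x))
def AA' (u v : ℝ → ℝ → ℝ) (e t x : ℝ) : ℝ := phi'' e (Wf u v (t, x)) * wxf u v (t, x)
def PhiI (u v : ℝ → ℝ → ℝ) (e t : ℝ) : ℝ := ∫ x in (0:ℝ)..1, phi e (Wf u v (t, x))
def RI (u v : ℝ → ℝ → ℝ) (e t : ℝ) : ℝ := ∫ x in (0:ℝ)..1, AA u v e t x * wtf u v (t, x)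
def BI (f : ℝ → ℝ) (u v : ℝ → ℝ → ℝ) (e t : ℝ) : ℝ :=
  ∫ x in (0:ℝ)..1, AA' u v e t x * Gf f u v (t, x)

variable {u v : ℝ → ℝ → ℝ} {f : ℝ → ℝ} {ν : ℝ}

section

variable (hu : ContDiff ℝ (⊤ : ℕ∞) (fun q : ℝ × ℝ => u q.1 q.2))
  (hv : ContDiff ℝ (⊤ : ℕ∞) (fun q : ℝ × ℝ => v q.1 q.2))
include hu hv

lemma hWsm : ContDiff ℝ (⊤ : ℕ∞) (Wf u v) := hu.sub hv

lemma hwtc : Continuous (wtf u v) :=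
  ((hWsm hu hv).continuous_fderiv (by simp)).clm_apply continuous_const

lemma hwxc : Continuous (wxf u v) :=
  ((hWsm hu hv).continuous_fderiv (by simp)).clm_apply continuous_const

lemma hasDerivAt_PhiI {e : ℝ} (he : 0 < e) (t : ℝ) :
    HasDerivAt (PhiI u v e) (RI u v e t) t := by
  have hW : ContDiff ℝ (⊤:ℕ∞) (Wf u v) := hu.sub hv
  have hWd : Differentiable ℝ (Wf u v) := hW.differentiable (by simp)
  have hWcont : Continuous (Wf u v) := hW.continuous
  have hwtcc : Continuous (wtf u v) := hwtc hu hv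
  obtain ⟨C, hC⟩ := (((isCompact_Icc (a := t - 1) (b := t + 1)).prod
    (isCompact_Icc (a := (0:ℝ)) (b := 1)))).exists_bound_of_continuousOn hwtcc.continuousOn
  refine (intervalIntegral.hasDerivAt_integral_of_dominated_loc_of_deriv_le
    (F := fun s x => phi e (Wf u v (s, x)))
    (F' := fun s x => AA u v e s x * wtf u v (s, x))
    (bound := fun _ => |C|) (s := Metric.ball t 1) (Metric.ball_mem_nhds t one_pos) ?_ ?_ ?_ ?_ ?_ ?_).2
  · exact Filter.Eventually.of_forall fun s =>
      (((continuous_phi e).comp (hWcont.comp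
        (continuous_const.prodMk continuous_id))).aestronglyMeasurable)
  · exact (((continuous_phi e).comp (hWcont.comp
      (continuous_const.prodMk continuous_id)))).intervalIntegrable _ _
  · exact (((continuous_phi' he).comp (hWcont.comp
      (continuous_const.prodMk continuous_id))).mul
        (hwtcc.comp (continuous_const.prodMk continuous_id))).aestronglyMeasurable
  · refine Filter.Eventually.of_forall fun y hy => fun s hs => ?_
    rw [Real.ball_eq_Ioo] at hs
    rw [Set.uIoc_of_le (by norm_num : (0:ℝ) ≤ 1)] at hy
    have h2 : ‖wtf u v (s, y)‖ ≤ C :=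
      hC (s, y) ⟨⟨hs.1.le, hs.2.le⟩, ⟨hy.1.le, hy.2⟩⟩
    calc ‖AA u v e s y * wtf u v (s, y)‖ = |AA u v e s y| * |wtf u v (s, y)| := abs_mul _ _
      _ ≤ 1 * |C| := by
          refine mul_le_mul (abs_phi'_le he _) ?_ (abs_nonneg _) zero_le_one
          exact le_trans h2 (le_abs_self C)
      _ = |C| := one_mul _
  · exact intervalIntegrable_const
  · refine Filter.Eventually.of_forall fun y hy => fun s hs => ?_
    exact (hasDerivAt_phi he (Wf u v (s, y))).comp (h₂ := phi e) s (hasDerivAt_slice1 hWd s y)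

lemma continuous_RI {e : ℝ} (he : 0 < e) : Continuous (RI u v e) := by
  have hWcont : Continuous (Wf u v) := (hu.sub hv).continuous
  exact intervalIntegral.continuous_parametric_intervalIntegral_of_continuous' (μ := volume)
    (f := fun t x => AA u v e t x * wtf u v (t, x))
    ((((continuous_phi' he).comp hWcont).mul (hwtc hu hv))) 0 1

lemma continuous_BI (hf : Continuous f) {e : ℝ} (he : 0 < e) :
    Continuous (BI f u v e) := by
  have hWcont : Continuous (Wf u v) := (hu.sub hv).continuous
  have hGc : Continuous (Gf f u v) :=
    (hf.comp hu.continuous).sub (hf.comp hv.continuous)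
  exact intervalIntegral.continuous_parametric_intervalIntegral_of_continuous' (μ := volume)
    (f := fun t x => AA' u v e t x * Gf f u v (t, x))
    (((((continuous_phi'' he).comp hWcont).mul (hwxc hu hv))).mul hGc) 0 1

lemma RI_le_BI (hf : ContDiff ℝ (⊤:ℕ∞) f) (hν : 0 ≤ ν)
    (huper : ∀ s, Function.Periodic (u s) 1) (hvper : ∀ s, Function.Periodic (v s) 1)
    {e : ℝ} (he : 0 < e) (t : ℝ)
    (heq : ∀ x, deriv (fun s => u s x) t - deriv (fun s => v s x) t
      = ν * (iteratedDeriv 2 (u t) x - iteratedDeriv 2 (v t) x)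
        - (deriv f (u t x) * deriv (u t) x - deriv f (v t x) * deriv (v t) x)) :
    RI u v e t ≤ BI f u v e t := by
  have hW : ContDiff ℝ (⊤:ℕ∞) (Wf u v) := hu.sub hv
  have hWd : Differentiable ℝ (Wf u v) := hW.differentiable (by simp)
  have hWcont : Continuous (Wf u v) := hW.continuous
  have hwxcc : Continuous (wxf u v) := hwxc hu hv
  have hg1 : ContDiff ℝ (⊤:ℕ∞) (u t) := hu.comp (contDiff_const.prodMk contDiff_id)
  have hg2 : ContDiff ℝ (⊤:ℕ∞) (v t) := hv.comp (contDiff_const.prodMk contDiff_id)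
  have hg1d : Differentiable ℝ (u t) := hg1.differentiable (by simp)
  have hg2d : Differentiable ℝ (v t) := hg2.differentiable (by simp)
  have hfd : Differentiable ℝ f := hf.differentiable (by simp)
  have hwloc : ContDiff ℝ (⊤:ℕ∞) (fun y => u t y - v t y) := hg1.sub hg2
  have hd1 : ContDiff ℝ (⊤:ℕ∞) (deriv (fun y => u t y - v t y)) :=
    (contDiff_infty_iff_deriv.mp hwloc).2
  have hd1u : ContDiff ℝ (⊤:ℕ∞) (deriv (u t)) := (contDiff_infty_iff_deriv.mp hg1).2
  have hd1v : ContDiff ℝ (⊤:ℕ∞) (deriv (v t)) := (contDiff_infty_iff_deriv.mp hg2).2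
  -- derivative facts
  have hAd : ∀ x, HasDerivAt (fun x => AA u v e t x) (AA' u v e t x) x := fun x =>
    (hasDerivAt_phi' he (Wf u v (t, x))).comp x (hasDerivAt_slice2 hWd t x)
  have hPd : ∀ x, HasDerivAt (deriv (fun y => u t y - v t y))
      (deriv (deriv (fun y => u t y - v t y)) x) x := fun x =>
    ((hd1.differentiable (by simp)) x).hasDerivAt
  have hGd : ∀ x, HasDerivAt (fun y => Gf f u v (t, y))
      (deriv f (u t x) * deriv (u t) x - deriv f (v t x) * deriv (v t) x) x := fun x =>
    (((hfd (u t x)).hasDerivAt).comp x ((hg1d x).hasDerivAt)).sub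
      (((hfd (v t x)).hasDerivAt).comp x ((hg2d x).hasDerivAt))
  have hPwx : ∀ x, deriv (fun y => u t y - v t y) x = wxf u v (t, x) := fun x =>
    (hasDerivAt_slice2 hWd t x).deriv
  -- continuity facts
  have hAc : Continuous (fun x => AA u v e t x) :=
    (continuous_phi' he).comp (hWcont.comp (continuous_const.prodMk continuous_id))
  have hA'c : Continuous (fun x => AA' u v e t x) :=
    ((continuous_phi'' he).comp (hWcont.comp (continuous_const.prodMk continuous_id))).mul
      (hwxcc.comp (continuous_const.prodMk continuous_id))
  have hPc : Continuous (deriv (fun y => u t y - v t y)) := hd1.continuous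
  have hP'c : Continuous (deriv (deriv (fun y => u t y - v t y))) :=
    hd1.continuous_deriv (by simp)
  have hGTc : Continuous (fun y => Gf f u v (t, y)) :=
    ((hf.continuous).comp hg1.continuous).sub ((hf.continuous).comp hg2.continuous)
  have hggc : Continuous (fun x =>
      deriv f (u t x) * deriv (u t) x - deriv f (v t x) * deriv (v t) x) :=
    ((((hf.continuous_deriv (by simp)).comp hg1.continuous)).mul
      hd1u.continuous).sub
      ((((hf.continuous_deriv (by simp)).comp hg2.continuous)).mul
        hd1v.continuous)
  -- integration by parts
  have hibp1 := intervalIntegral.integral_mul_deriv_eq_deriv_mul (a := (0:ℝ)) (b := 1)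
    (u := fun x => AA u v e t x) (u' := fun x => AA' u v e t x)
    (v := deriv (fun y => u t y - v t y)) (v' := deriv (deriv (fun y => u t y - v t y)))
    (fun x _ => hAd x) (fun x _ => hPd x)
    (hA'c.intervalIntegrable _ _) (hP'c.intervalIntegrable _ _)
  have hibp2 := intervalIntegral.integral_mul_deriv_eq_deriv_mul (a := (0:ℝ)) (b := 1)
    (u := fun x => AA u v e t x) (u' := fun x => AA' u v e t x)
    (v := fun y => Gf f u v (t, y))
    (v' := fun x => deriv f (u t x) * deriv (u t) x - deriv f (v t x) * deriv (v t) x)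
    (fun x _ => hAd x) (fun x _ => hGd x)
    (hA'c.intervalIntegrable _ _) (hggc.intervalIntegrable _ _)
  -- periodicity kills boundary terms
  have hwper : Function.Periodic (fun y => u t y - v t y) 1 := (huper t).sub (hvper t)
  have h10 : u t 1 - v t 1 = u t 0 - v t 0 := hwper.eq
  have hAb : AA u v e t 1 = AA u v e t 0 := by
    simp only [AA, Wf]; rw [h10]
  have hPb : deriv (fun y => u t y - v t y) 1 = deriv (fun y => u t y - v t y) 0 :=
    (periodic_deriv hwper).eq
  have hGTb : Gf f u v (t, 1) = Gf f u v (t, 0) := by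
    simp only [Gf]
    rw [show u t 1 = u t 0 from by simpa using huper t 0,
      show v t 1 = v t 0 from by simpa using hvper t 0]
  have e1 : (∫ x in (0:ℝ)..1, AA u v e t x * deriv (deriv (fun y => u t y - v t y)) x)
      = - ∫ x in (0:ℝ)..1, AA' u v e t x * deriv (fun y => u t y - v t y) x := by
    rw [hibp1]; beta_reduce; rw [hAb, hPb]; ring
  have e2 : (∫ x in (0:ℝ)..1,
        AA u v e t x * (deriv f (u t x) * deriv (u t) x - deriv f (v t x) * deriv (v t) x))
      = - ∫ x in (0:ℝ)..1, AA' u v e t x * Gf f u v (t, x) := by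
    rw [hibp2]; beta_reduce; rw [hAb, hGTb]; ring
  -- rewrite RI using the PDE
  have step1 : RI u v e t = ∫ x in (0:ℝ)..1,
      (ν * (AA u v e t x * deriv (deriv (fun y => u t y - v t y)) x)
        - AA u v e t x *
          (deriv f (u t x) * deriv (u t) x - deriv f (v t x) * deriv (v t) x)) := by
    rw [RI]
    apply intervalIntegral.integral_congr
    intro x _
    beta_reduce
    have hwt : wtf u v (t, x) = deriv (fun s => u s x) t - deriv (fun s => v s x) t := by
      have hus := hasDerivAt_slice1 (hu.differentiable (by simp)) t x
      have hvs := hasDerivAt_slice1 (hv.differentiable (by simp)) t x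
      have hws : HasDerivAt (fun s => Wf u v (s, x))
          (fderiv ℝ (fun q : ℝ × ℝ => u q.1 q.2) (t, x) (1, 0)
            - fderiv ℝ (fun q : ℝ × ℝ => v q.1 q.2) (t, x) (1, 0)) t := hus.sub hvs
      rw [show wtf u v (t, x) = fderiv ℝ (Wf u v) (t, x) (1, 0) from rfl,
        (hasDerivAt_slice1 hWd t x).unique hws, ← hus.deriv, ← hvs.deriv]
    have h2nd : deriv (deriv (fun y => u t y - v t y)) x
        = iteratedDeriv 2 (u t) x - iteratedDeriv 2 (v t) x := by
      have hfe : deriv (fun y => u t y - v t y) = fun y => deriv (u t) y - deriv (v t) y :=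
        funext fun y => deriv_sub (hg1d y) (hg2d y)
      rw [hfe, deriv_fun_sub ((hd1u.differentiable (by simp)) x)
        ((hd1v.differentiable (by simp)) x)]
      rw [show iteratedDeriv 2 (u t) = deriv (deriv (u t)) from by
          rw [iteratedDeriv_succ, iteratedDeriv_one],
        show iteratedDeriv 2 (v t) = deriv (deriv (v t)) from by
          rw [iteratedDeriv_succ, iteratedDeriv_one]]
    have hx1 := heq x
    rw [hwt, hx1, h2nd]
    ring
  have hsplit : (∫ x in (0:ℝ)..1,
      (ν * (AA u v e t x * deriv (deriv (fun y => u t y - v t y)) x)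
        - AA u v e t x *
          (deriv f (u t x) * deriv (u t) x - deriv f (v t x) * deriv (v t) x)))
      = ν * (∫ x in (0:ℝ)..1, AA u v e t x * deriv (deriv (fun y => u t y - v t y)) x)
        - ∫ x in (0:ℝ)..1, AA u v e t x *
            (deriv f (u t x) * deriv (u t) x - deriv f (v t x) * deriv (v t) x) := by
    rw [intervalIntegral.integral_sub
      (f := fun x => ν * (AA u v e t x * deriv (deriv (fun y => u t y - v t y)) x))
      (g := fun x => AA u v e t x *
        (deriv f (u t x) * deriv (u t) x - deriv f (v t x) * deriv (v t) x))
      ((continuous_const.mul (hAc.mul hP'c)).intervalIntegrable _ _)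
      ((hAc.mul hggc).intervalIntegrable _ _),
      intervalIntegral.integral_const_mul]
  have hQ : 0 ≤ ∫ x in (0:ℝ)..1, AA' u v e t x * deriv (fun y => u t y - v t y) x := by
    apply intervalIntegral.integral_nonneg (by norm_num)
    intro x _
    rw [hPwx x, AA', mul_assoc]
    exact mul_nonneg (phi''_nonneg _ _) (mul_self_nonneg _)
  calc RI u v e t
      = ν * (∫ x in (0:ℝ)..1, AA u v e t x * deriv (deriv (fun y => u t y - v t y)) x)
        - ∫ x in (0:ℝ)..1, AA u v e t x *
            (deriv f (u t x) * deriv (u t) x - deriv f (v t x) * deriv (v t) x) :=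
        step1.trans hsplit
    _ = (∫ x in (0:ℝ)..1, AA' u v e t x * Gf f u v (t, x))
        - ν * ∫ x in (0:ℝ)..1, AA' u v e t x * deriv (fun y => u t y - v t y) x := by
        rw [e1, e2]; ring
    _ ≤ ∫ x in (0:ℝ)..1, AA' u v e t x * Gf f u v (t, x) :=
        sub_le_self _ (mul_nonneg hν hQ)
    _ = BI f u v e t := rfl

end

end B19

/-- L¹ contraction for the forced generalised Burgers equation: two smooth
space-periodic solutions with the same force satisfy
`|u(t) - ū(t)|_{L¹} ≤ |u(0) - ū(0)|_{L¹}` for all `t ≥ 0`. -/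
theorem stmt19 (f : ℝ → ℝ) (σ ν : ℝ)
    (hf : ContDiff ℝ (⊤ : ℕ∞) f) (hσ : 0 < σ)
    (hconv : ∀ x, σ ≤ iteratedDeriv 2 f x) (hν : 0 < ν)
    (η u v : ℝ → ℝ → ℝ)
    (hη : Continuous (fun q : ℝ × ℝ => η q.1 q.2))
    (hηx : ∀ t, ContDiff ℝ (⊤ : ℕ∞) (η t))
    (hηper : ∀ t, Function.Periodic (η t) 1)
    (hu : ContDiff ℝ (⊤ : ℕ∞) (fun q : ℝ × ℝ => u q.1 q.2))
    (hv : ContDiff ℝ (⊤ : ℕ∞) (fun q : ℝ × ℝ => v q.1 q.2))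
    (huper : ∀ t, Function.Periodic (u t) 1)
    (hvper : ∀ t, Function.Periodic (v t) 1)
    (hueq : ∀ t, 0 ≤ t → ∀ x,
      deriv (fun s => u s x) t + deriv f (u t x) * deriv (u t) x
        = ν * iteratedDeriv 2 (u t) x + η t x)
    (hveq : ∀ t, 0 ≤ t → ∀ x,
      deriv (fun s => v s x) t + deriv f (v t x) * deriv (v t) x
        = ν * iteratedDeriv 2 (v t) x + η t x) :
    ∀ t, 0 ≤ t →
      (∫ x in (0:ℝ)..1, |u t x - v t x|) ≤ ∫ x in (0:ℝ)..1, |u 0 x - v 0 x| := by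
  intro T hT
  have hWc : ContDiff ℝ (⊤:ℕ∞) (B19.Wf u v) := hu.sub hv
  have hWcont : Continuous (B19.Wf u v) := hWc.continuous
  have hwxcc : Continuous (B19.wxf u v) := B19.hwxc hu hv
  have hGc : Continuous (B19.Gf f u v) :=
    ((hf.continuous).comp hu.continuous).sub ((hf.continuous).comp hv.continuous)
  have hKcomp : IsCompact ((Icc (0:ℝ) T) ×ˢ (Icc (0:ℝ) 1)) := isCompact_Icc.prod isCompact_Icc
  obtain ⟨Mu, hMu⟩ := hKcomp.exists_bound_of_continuousOn hu.continuous.continuousOn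
  obtain ⟨Mv, hMv⟩ := hKcomp.exists_bound_of_continuousOn hv.continuous.continuousOn
  set M : ℝ := max Mu Mv with hM
  obtain ⟨L₀, hL₀⟩ := (isCompact_Icc (a := -M) (b := M)).exists_bound_of_continuousOn
    ((hf.continuous_deriv (by simp))).continuousOn
  set L : ℝ := max L₀ 0 with hLdef
  have hLnn : 0 ≤ L := le_max_right _ _
  obtain ⟨C₀, hC₀⟩ := hKcomp.exists_bound_of_continuousOn hwxcc.continuousOn
  set C1 : ℝ := max C₀ 0 with hC1def
  have hC1nn : 0 ≤ C1 := le_max_right _ _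
  obtain ⟨CG₀, hCG₀⟩ := hKcomp.exists_bound_of_continuousOn hGc.continuousOn
  set CG : ℝ := max CG₀ 0 with hCGdef
  have hCGnn : 0 ≤ CG := le_max_right _ _
  have hLip : ∀ q ∈ (Icc (0:ℝ) T) ×ˢ (Icc (0:ℝ) 1),
      |B19.Gf f u v q| ≤ L * |B19.Wf u v q| := by
    intro q hq
    have h1' := hMu q hq
    have h2' := hMv q hq
    simp only [Real.norm_eq_abs, abs_le] at h1' h2'
    have h1 : u q.1 q.2 ∈ Icc (-M) M :=
      ⟨by have := le_max_left Mu Mv; linarith [h1'.1], by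
        have := le_max_left Mu Mv; linarith [h1'.2]⟩
    have h2 : v q.1 q.2 ∈ Icc (-M) M :=
      ⟨by have := le_max_right Mu Mv; linarith [h2'.1], by
        have := le_max_right Mu Mv; linarith [h2'.2]⟩
    have := Convex.norm_image_sub_le_of_norm_deriv_le (f := f) (s := Icc (-M) M) (C := L)
      (fun y _ => (hf.differentiable (by simp)).differentiableAt)
      (fun y hy => (hL₀ y hy).trans (le_max_left _ _)) (convex_Icc _ _) h2 h1
    simpa [B19.Gf, B19.Wf, Real.norm_eq_abs] using this
  have hbnd : ∀ e : ℝ, 0 < e → ∀ q ∈ (Icc (0:ℝ) T) ×ˢ (Icc (0:ℝ) 1),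
      |B19.phi'' e (B19.Wf u v q) * B19.wxf u v q * B19.Gf f u v q| ≤ L * C1 := by
    intro e he q hq
    have a1 := hLip q hq
    have a2 := B19.phi''_mul_abs_le he (B19.Wf u v q)
    have a3 : |B19.wxf u v q| ≤ C1 := by
      have := hC₀ q hq
      rw [Real.norm_eq_abs] at this
      exact this.trans (le_max_left _ _)
    have a4 := B19.phi''_nonneg e (B19.Wf u v q)
    rw [abs_mul, abs_mul, abs_of_nonneg a4]
    calc B19.phi'' e (B19.Wf u v q) * |B19.wxf u v q| * |B19.Gf f u v q|
        ≤ B19.phi'' e (B19.Wf u v q) * |B19.wxf u v q| * (L * |B19.Wf u v q|) :=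
          mul_le_mul_of_nonneg_left a1 (mul_nonneg a4 (abs_nonneg _))
      _ = (L * (B19.phi'' e (B19.Wf u v q) * |B19.Wf u v q|)) * |B19.wxf u v q| := by ring
      _ ≤ (L * 1) * C1 :=
          mul_le_mul (mul_le_mul_of_nonneg_left a2 hLnn) a3 (abs_nonneg _)
            (by simpa using hLnn)
      _ = L * C1 := by ring
  have key : ∀ e : ℝ, 0 < e →
      (∫ x in (0:ℝ)..1, |u T x - v T x|) ≤ (∫ x in (0:ℝ)..1, |u 0 x - v 0 x|) + e
        + ∫ t in (0:ℝ)..T, B19.BI f u v e t := by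
    intro e he
    have hFTC : ∫ t in (0:ℝ)..T, B19.RI u v e t = B19.PhiI u v e T - B19.PhiI u v e 0 :=
      intervalIntegral.integral_eq_sub_of_hasDerivAt
        (fun t _ => B19.hasDerivAt_PhiI hu hv he t)
        ((B19.continuous_RI hu hv he).intervalIntegrable _ _)
    have hmono : (∫ t in (0:ℝ)..T, B19.RI u v e t) ≤ ∫ t in (0:ℝ)..T, B19.BI f u v e t := by
      apply intervalIntegral.integral_mono_on hT
        ((B19.continuous_RI hu hv he).intervalIntegrable _ _)
        ((B19.continuous_BI hu hv hf.continuous he).intervalIntegrable _ _)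
      intro t ht
      apply B19.RI_le_BI hu hv hf hν.le huper hvper he t
      intro x
      have h1 := hueq t ht.1 x
      have h2 := hveq t ht.1 x
      linarith
    have hlow : (∫ x in (0:ℝ)..1, |u T x - v T x|) ≤ B19.PhiI u v e T := by
      show _ ≤ ∫ x in (0:ℝ)..1, B19.phi e (B19.Wf u v (T, x))
      apply intervalIntegral.integral_mono_on (by norm_num)
        ((continuous_abs.comp (hWcont.comp
          (continuous_const.prodMk continuous_id))).intervalIntegrable _ _)
        (((B19.continuous_phi e).comp (hWcont.comp
          (continuous_const.prodMk continuous_id))).intervalIntegrable _ _)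
      intro x _
      exact B19.abs_le_phi _
    have hup : B19.PhiI u v e 0 ≤ (∫ x in (0:ℝ)..1, |u 0 x - v 0 x|) + e := by
      have h1 : B19.PhiI u v e 0 ≤ ∫ x in (0:ℝ)..1, (|u 0 x - v 0 x| + e) := by
        show (∫ x in (0:ℝ)..1, B19.phi e (B19.Wf u v (0, x))) ≤ _
        apply intervalIntegral.integral_mono_on (by norm_num)
          (((B19.continuous_phi e).comp (hWcont.comp
            (continuous_const.prodMk continuous_id))).intervalIntegrable _ _)
          (((continuous_abs.comp (hWcont.comp
            (continuous_const.prodMk continuous_id))).add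
              continuous_const).intervalIntegrable _ _)
        intro x _
        show B19.phi e (B19.Wf u v (0, x)) ≤ |u 0 x - v 0 x| + e
        have h3 := B19.phi_sub_abs_le he (B19.Wf u v (0, x))
        have h4 : |B19.Wf u v (0, x)| = |u 0 x - v 0 x| := rfl
        linarith [h3, h4]
      have h2 : (∫ x in (0:ℝ)..1, (|u 0 x - v 0 x| + e))
          = (∫ x in (0:ℝ)..1, |u 0 x - v 0 x|) + e := by
        have hA : IntervalIntegrable (fun x => |u 0 x - v 0 x|) volume 0 1 :=
          (continuous_abs.comp (hWcont.comp
            (continuous_const.prodMk continuous_id))).intervalIntegrable _ _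
        rw [intervalIntegral.integral_add hA intervalIntegrable_const,
          intervalIntegral.integral_const]
        simp
      linarith
    linarith
  have hepos : ∀ n : ℕ, (0:ℝ) < 1/((n:ℝ)+1) := fun n => by positivity
  have hseq : Filter.Tendsto (fun n : ℕ => (1:ℝ)/((n:ℝ)+1)) Filter.atTop (nhds 0) :=
    tendsto_one_div_add_atTop_nhds_zero_nat
  have hintc : ∀ e : ℝ, 0 < e → ∀ t : ℝ,
      Continuous fun x => B19.AA' u v e t x * B19.Gf f u v (t, x) := by
    intro e he t
    exact (((B19.continuous_phi'' he).comp (hWcont.comp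
      (continuous_const.prodMk continuous_id))).mul
        (hwxcc.comp (continuous_const.prodMk continuous_id))).mul
          (hGc.comp (continuous_const.prodMk continuous_id))
  have hJlim : Filter.Tendsto (fun n : ℕ => ∫ t in (0:ℝ)..T, B19.BI f u v (1/((n:ℝ)+1)) t)
      Filter.atTop (nhds 0) := by
    have hmain := intervalIntegral.tendsto_integral_filter_of_dominated_convergence
      (μ := volume) (a := 0) (b := T) (l := Filter.atTop (α := ℕ)) (F := fun (n : ℕ) t => B19.BI f u v (1/((n:ℝ)+1)) t)
      (f := fun _ => (0:ℝ)) (bound := fun _ => L * C1) ?_ ?_ ?_ ?_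
    · simpa using hmain
    · exact Filter.Eventually.of_forall fun n =>
        (B19.continuous_BI hu hv hf.continuous (hepos n)).aestronglyMeasurable
    · refine Filter.Eventually.of_forall fun n => Filter.Eventually.of_forall fun t ht => ?_
      rw [Set.uIoc_of_le hT] at ht
      have htm : t ∈ Icc (0:ℝ) T := ⟨ht.1.le, ht.2⟩
      have hnorm := intervalIntegral.norm_integral_le_of_norm_le_const
        (a := 0) (b := 1) (C := L * C1)
        (f := fun x => B19.AA' u v (1/((n:ℝ)+1)) t x * B19.Gf f u v (t, x)) ?_
      · simpa [B19.BI] using hnorm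
      · intro x hx
        rw [Set.uIoc_of_le (by norm_num : (0:ℝ) ≤ 1)] at hx
        have hqmem : (t, x) ∈ (Icc (0:ℝ) T) ×ˢ (Icc (0:ℝ) 1) := ⟨htm, hx.1.le, hx.2⟩
        simpa [B19.AA', Real.norm_eq_abs, abs_mul] using
          hbnd (1/((n:ℝ)+1)) (hepos n) (t, x) hqmem
    · exact intervalIntegrable_const
    · refine Filter.Eventually.of_forall fun t ht => ?_
      rw [Set.uIoc_of_le hT] at ht
      have htm : t ∈ Icc (0:ℝ) T := ⟨ht.1.le, ht.2⟩
      have hinner := intervalIntegral.tendsto_integral_filter_of_dominated_convergence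
        (μ := volume) (a := 0) (b := 1) (l := Filter.atTop (α := ℕ))
        (F := fun (n : ℕ) x => B19.AA' u v (1/((n:ℝ)+1)) t x * B19.Gf f u v (t, x))
        (f := fun _ => (0:ℝ)) (bound := fun _ => L * C1) ?_ ?_ ?_ ?_
      · simpa [B19.BI] using hinner
      · exact Filter.Eventually.of_forall fun n =>
          (hintc (1/((n:ℝ)+1)) (hepos n) t).aestronglyMeasurable
      · refine Filter.Eventually.of_forall fun n => Filter.Eventually.of_forall fun x hx => ?_
        rw [Set.uIoc_of_le (by norm_num : (0:ℝ) ≤ 1)] at hx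
        have hqmem : (t, x) ∈ (Icc (0:ℝ) T) ×ˢ (Icc (0:ℝ) 1) := ⟨htm, hx.1.le, hx.2⟩
        simpa [B19.AA', Real.norm_eq_abs, abs_mul] using
          hbnd (1/((n:ℝ)+1)) (hepos n) (t, x) hqmem
      · exact intervalIntegrable_const
      · refine Filter.Eventually.of_forall fun x hx => ?_
        rw [Set.uIoc_of_le (by norm_num : (0:ℝ) ≤ 1)] at hx
        have hqmem : (t, x) ∈ (Icc (0:ℝ) T) ×ˢ (Icc (0:ℝ) 1) := ⟨htm, hx.1.le, hx.2⟩
        by_cases hw0 : B19.Wf u v (t, x) = 0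
        · have hG0 : B19.Gf f u v (t, x) = 0 := by
            have h' : u t x - v t x = 0 := hw0
            have h'' : u t x = v t x := sub_eq_zero.mp h'
            simp [B19.Gf, h'']
          have hz : ∀ n : ℕ, B19.AA' u v (1/((n:ℝ)+1)) t x * B19.Gf f u v (t, x) = 0 :=
            fun n => by rw [hG0, mul_zero]
          simp only [hz]
          exact tendsto_const_nhds
        · apply squeeze_zero_norm
            (a := fun n : ℕ => (1/((n:ℝ)+1)) * (1/((n:ℝ)+1))
              * ((C1 * CG) / |B19.Wf u v (t, x)|^3))
          · intro n
            have a3 : |B19.wxf u v (t, x)| ≤ C1 := by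
              have := hC₀ (t, x) hqmem
              rw [Real.norm_eq_abs] at this
              exact this.trans (le_max_left _ _)
            have aG : |B19.Gf f u v (t, x)| ≤ CG := by
              have := hCG₀ (t, x) hqmem
              rw [Real.norm_eq_abs] at this
              exact this.trans (le_max_left _ _)
            have a5 := B19.phi''_le (hepos n) hw0
            have a4 := B19.phi''_nonneg (1/((n:ℝ)+1)) (B19.Wf u v (t, x))
            have habs : 0 < |B19.Wf u v (t, x)| := abs_pos.2 hw0
            rw [Real.norm_eq_abs]
            calc |B19.AA' u v (1/((n:ℝ)+1)) t x * B19.Gf f u v (t, x)|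
                = B19.phi'' (1/((n:ℝ)+1)) (B19.Wf u v (t, x)) * |B19.wxf u v (t, x)|
                  * |B19.Gf f u v (t, x)| := by
                  simp only [B19.AA']
                  rw [abs_mul, abs_mul, abs_of_nonneg a4]
              _ ≤ ((1/((n:ℝ)+1))^2 / |B19.Wf u v (t, x)|^3) * C1 * CG := by
                  have hnn : (0:ℝ) ≤ (1/((n:ℝ)+1))^2 / |B19.Wf u v (t, x)|^3 := by positivity
                  exact mul_le_mul (mul_le_mul a5 a3 (abs_nonneg _) hnn) aG (abs_nonneg _)
                    (mul_nonneg hnn hC1nn)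
              _ = (1/((n:ℝ)+1)) * (1/((n:ℝ)+1)) * ((C1 * CG) / |B19.Wf u v (t, x)|^3) := by
                  ring
          · have := (hseq.mul hseq).mul_const ((C1 * CG) / |B19.Wf u v (t, x)|^3)
            simpa using this
  have hfinal : Filter.Tendsto (fun n : ℕ => (∫ x in (0:ℝ)..1, |u 0 x - v 0 x|)
      + ((1:ℝ)/((n:ℝ)+1) + ∫ t in (0:ℝ)..T, B19.BI f u v (1/((n:ℝ)+1)) t))
      Filter.atTop (nhds (∫ x in (0:ℝ)..1, |u 0 x - v 0 x|)) := by
    have := tendsto_const_nhds (x := (∫ x in (0:ℝ)..1, |u 0 x - v 0 x|))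
      (f := Filter.atTop (α := ℕ)) |>.add (hseq.add hJlim)
    simpa using this
  refine ge_of_tendsto' hfinal fun n => ?_
  have := key (1/((n:ℝ)+1)) (hepos n)
  linarith
end
end
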